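/- Let V be a finite-dimensional representation of sl2 over a field of characteristic zero, with e, f, h acting as the standard basis. Then dim(ker f) + dim(range e) = dim V. -/

import Mathlib

section Sl2Aux

variable (K : Type*) {A : Type*} [Field K] [CharZero K] [Ring A] [Algebra K A]

/-- Truncated exponential. -/
noncomputable def sl2exp (a : A) (N : ℕ) : A :=
  ∑ i ∈ Finset.range N, ((i.factorial : K)⁻¹) • a ^ i

variable {K}

lemma sl2exp_eq_of_pow_eq_zero {a : A} {N L : ℕ} (hNL : N ≤ L) (ha : a ^ N = 0) :
    sl2exp K a L = sl2exp K a N := by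
  unfold sl2exp
  refine (Finset.sum_subset (Finset.range_subset_range.mpr hNL) ?_).symm
  intro i _ hi
  rw [Finset.mem_range, not_lt] at hi
  rw [pow_eq_zero_of_le hi ha, smul_zero]

lemma sl2exp_fac {k i : ℕ} (h : i ≤ k) :
    (k.factorial : K)⁻¹ * (k.choose i : K) = (i.factorial : K)⁻¹ * ((k - i).factorial : K)⁻¹ := by
  have key : ((k.choose i : ℕ) : K) * (i.factorial : K) * ((k - i).factorial : K)
      = (k.factorial : K) := by
    exact_mod_cast congrArg (Nat.cast : ℕ → K) (Nat.choose_mul_factorial_mul_factorial h)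
  have h1 : (i.factorial : K) ≠ 0 := Nat.cast_ne_zero.mpr i.factorial_ne_zero
  have h2 : ((k - i).factorial : K) ≠ 0 := Nat.cast_ne_zero.mpr (k - i).factorial_ne_zero
  have h3 : (k.factorial : K) ≠ 0 := Nat.cast_ne_zero.mpr k.factorial_ne_zero
  field_simp
  linear_combination key

lemma sl2exp_mul {a b : A} (hc : Commute a b) {N M : ℕ} (ha : a ^ N = 0) (hb : b ^ M = 0) :
    sl2exp K a N * sl2exp K b M = sl2exp K (a + b) (N + M) := by
  have hvan : ∀ p : ℕ × ℕ, (N ≤ p.1 ∨ M ≤ p.2) →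
      ((p.1.factorial : K)⁻¹ * (p.2.factorial : K)⁻¹) • (a ^ p.1 * b ^ p.2) = 0 := by
    rintro ⟨i, j⟩ (h | h)
    · rw [pow_eq_zero_of_le h ha, zero_mul, smul_zero]
    · rw [pow_eq_zero_of_le h hb, mul_zero, smul_zero]
  have lhs_eq : sl2exp K a N * sl2exp K b M =
      ∑ p ∈ Finset.range (N + M) ×ˢ Finset.range (N + M),
        ((p.1.factorial : K)⁻¹ * (p.2.factorial : K)⁻¹) • (a ^ p.1 * b ^ p.2) := by
    unfold sl2exp
    rw [Finset.sum_mul_sum, ← Finset.sum_product']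
    refine Eq.trans (Finset.sum_congr rfl fun p _ => smul_mul_smul_comm _ _ _ _) ?_
    refine Finset.sum_subset
      (Finset.product_subset_product (Finset.range_subset_range.mpr (Nat.le_add_right _ _))
        (Finset.range_subset_range.mpr (Nat.le_add_left _ _))) ?_
    intro p hp hnp
    simp only [Finset.mem_product, Finset.mem_range] at hp hnp
    refine hvan p ?_
    rcases not_and_or.mp hnp with h | h <;> omega
  have rhs_eq : sl2exp K (a + b) (N + M) =
      ∑ p ∈ (Finset.range (N + M) ×ˢ Finset.range (N + M)).filter (fun p => p.1 + p.2 < N + M),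
        ((p.1.factorial : K)⁻¹ * (p.2.factorial : K)⁻¹) • (a ^ p.1 * b ^ p.2) := by
    unfold sl2exp
    have hk : ∀ k ∈ Finset.range (N + M), (k.factorial : K)⁻¹ • (a + b) ^ k =
        ∑ i ∈ Finset.range (k + 1),
          ((i.factorial : K)⁻¹ * ((k - i).factorial : K)⁻¹) • (a ^ i * b ^ (k - i)) := by
      intro k _
      rw [hc.add_pow, Finset.smul_sum]
      refine Finset.sum_congr rfl fun i hi => ?_
      rw [Finset.mem_range] at hi
      have : a ^ i * b ^ (k - i) * (k.choose i : A) = (k.choose i : K) • (a ^ i * b ^ (k - i)) := by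
        rw [(Nat.commute_cast _ _).eq, ← nsmul_eq_mul, ← Nat.cast_smul_eq_nsmul K]
      rw [this, smul_smul, sl2exp_fac (Nat.lt_succ_iff.mp hi)]
    rw [Finset.sum_congr rfl hk, Finset.sum_sigma']
    refine Finset.sum_nbij' (fun p => (p.2, p.1 - p.2)) (fun p => ⟨p.1 + p.2, p.1⟩)
      ?_ ?_ ?_ ?_ ?_
    · rintro ⟨k, i⟩ h
      simp only [Finset.mem_sigma, Finset.mem_range] at h
      simp only [Finset.mem_filter, Finset.mem_product, Finset.mem_range]
      omega
    · rintro ⟨i, j⟩ h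
      simp only [Finset.mem_filter, Finset.mem_product, Finset.mem_range] at h
      simp only [Finset.mem_sigma, Finset.mem_range]
      omega
    · rintro ⟨k, i⟩ h
      simp only [Finset.mem_sigma, Finset.mem_range] at h
      simp only [Sigma.mk.inj_iff]
      constructor
      · omega
      · exact HEq.rfl
    · rintro ⟨i, j⟩ h
      simp only [Finset.mem_filter, Finset.mem_product, Finset.mem_range] at h
      simp [Nat.add_sub_cancel_left]
    · rintro ⟨k, i⟩ h
      rfl
  rw [lhs_eq, rhs_eq]
  refine (Finset.sum_filter_of_ne ?_).symm
  intro p hp h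
  by_contra hlt
  exact h (hvan p (by omega)) |>.elim


lemma sl2exp_zero {N : ℕ} (hN : 1 ≤ N) : sl2exp K (0 : A) N = 1 := by
  rw [sl2exp_eq_of_pow_eq_zero hN (by simp), sl2exp]
  simp

lemma sl2exp_mul_neg {a : A} {N : ℕ} (hN : 1 ≤ N) (ha : a ^ N = 0) :
    sl2exp K a N * sl2exp K (-a) N = 1 := by
  rw [sl2exp_mul (Commute.neg_right (Commute.refl a)) ha (by rw [neg_pow, ha, mul_zero]),
    add_neg_cancel, sl2exp_zero (by omega)]

lemma sl2exp_neg_mul {a : A} {N : ℕ} (hN : 1 ≤ N) (ha : a ^ N = 0) :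
    sl2exp K (-a) N * sl2exp K a N = 1 := by
  have := sl2exp_mul_neg (K := K) (a := -a) (N := N) hN (by rw [neg_pow, ha, mul_zero])
  rwa [neg_neg] at this

lemma sl2exp_mulLeft_apply (a x : A) (N : ℕ) :
    sl2exp K (LinearMap.mulLeft K a) N x = sl2exp K a N * x := by
  unfold sl2exp
  rw [LinearMap.coe_sum, Finset.sum_apply, Finset.sum_mul]
  refine Finset.sum_congr rfl fun i _ => ?_
  rw [LinearMap.smul_apply, LinearMap.pow_mulLeft, LinearMap.mulLeft_apply, smul_mul_assoc]

lemma sl2exp_mulRight_apply (a x : A) (N : ℕ) :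
    sl2exp K (LinearMap.mulRight K a) N x = x * sl2exp K a N := by
  unfold sl2exp
  rw [LinearMap.coe_sum, Finset.sum_apply, Finset.mul_sum]
  refine Finset.sum_congr rfl fun i _ => ?_
  rw [LinearMap.smul_apply, LinearMap.pow_mulRight, LinearMap.mulRight_apply, mul_smul_comm]

/-- Conjugation by the truncated exponential is the truncated exponential of `ad a`. -/
lemma sl2exp_conj (a x : A) {N : ℕ} (ha : a ^ N = 0) :
    sl2exp K a N * x * sl2exp K (-a) N =
      sl2exp K (LinearMap.mulLeft K a - LinearMap.mulRight K a : Module.End K A) (N + N) x := by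
  have hl : (LinearMap.mulLeft K a : Module.End K A) ^ N = 0 := by
    rw [LinearMap.pow_mulLeft, ha]
    ext y
    simp
  have hr : (-(LinearMap.mulRight K a) : Module.End K A) ^ N = 0 := by
    have hnp : (-(LinearMap.mulRight K a) : Module.End K A) ^ N
        = (-1) ^ N * (LinearMap.mulRight K a) ^ N := neg_pow (R := Module.End K A) _ _
    rw [hnp, LinearMap.pow_mulRight, ha]
    ext y
    simp
  have hc : Commute (LinearMap.mulLeft K a : Module.End K A) (-(LinearMap.mulRight K a)) :=
    Commute.neg_right (R := Module.End K A) (LinearMap.commute_mulLeft_right a a)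
  have key := sl2exp_mul (K := K) hc hl hr
  have h2 : (LinearMap.mulLeft K a + -(LinearMap.mulRight K a) : Module.End K A)
      = LinearMap.mulLeft K a - LinearMap.mulRight K a := (sub_eq_add_neg _ _).symm
  rw [h2] at key
  have := congrArg (fun T : Module.End K A => T x) key
  simp only [Module.End.mul_apply] at this
  rw [← this]
  have hneg : (-(LinearMap.mulRight K a) : Module.End K A) = LinearMap.mulRight K (-a) := by
    ext y
    simp
  rw [hneg, sl2exp_mulRight_apply, sl2exp_mulLeft_apply, mul_assoc]

/-- Value of a truncated exponential of an endomorphism on an orbit that dies in 3 steps. -/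
lemma sl2exp_end_apply (D : Module.End K A) {x y z : A} (hx : D x = y) (hy : D y = z)
    (hz : D z = 0) {M : ℕ} (hM : 3 ≤ M) :
    sl2exp K D M x = x + y + (2 : K)⁻¹ • z := by
  have hpow : ∀ k, 3 ≤ k → (D ^ k) x = 0 := by
    have h3 : ∀ j, (D ^ (3 + j)) x = 0 := by
      intro j
      induction j with
      | zero =>
        show (D ^ 3) x = 0
        rw [pow_succ, pow_succ, pow_one, Module.End.mul_apply, Module.End.mul_apply, hx, hy, hz]
      | succ j ih =>
        rw [show 3 + (j + 1) = (3 + j) + 1 by omega, pow_succ', Module.End.mul_apply, ih, map_zero]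
    intro k hk
    rw [show k = 3 + (k - 3) by omega]
    exact h3 _
  have expand : sl2exp K D M x = ∑ k ∈ Finset.range M, (k.factorial : K)⁻¹ • (D ^ k) x := by
    unfold sl2exp
    rw [LinearMap.coe_sum, Finset.sum_apply]
    exact Finset.sum_congr rfl fun k _ => by rw [LinearMap.smul_apply]
  rw [expand, ← Finset.sum_subset (Finset.range_subset_range.mpr hM)
    (fun k _ hk => by rw [hpow k (by simpa using hk), smul_zero])]
  rw [show (3 : ℕ) = 2 + 1 from rfl, Finset.sum_range_succ, Finset.sum_range_succ,
    Finset.sum_range_one]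
  have e0 : (D ^ 0) x = x := rfl
  have e1 : (D ^ 1) x = y := by rw [pow_one, hx]
  have e2 : (D ^ 2) x = z := by rw [pow_succ, pow_one, Module.End.mul_apply, hx, hy]
  rw [e0, e1, e2]
  norm_num [Nat.factorial]


/-- An operator satisfying `[H,a] = c • a` with `c ≠ 0` is nilpotent (char zero, fin dim). -/
lemma sl2_isNilpotent [FiniteDimensional K A] {H a : A} {c : K} (hc : c ≠ 0)
    (h : H * a - a * H = c • a) : IsNilpotent a := by
  by_contra hn
  rw [IsNilpotent] at hn
  push_neg at hn
  set T : Module.End K A := LinearMap.mulLeft K H - LinearMap.mulRight K H with hT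
  have hTapp : ∀ x : A, T x = H * x - x * H := fun x => by
    simp [hT, LinearMap.sub_apply]
  have key : ∀ k : ℕ, T (a ^ k) = ((k : K) * c) • a ^ k := by
    intro k
    induction k with
    | zero => simp [hTapp]
    | succ k ih =>
      rw [hTapp] at ih ⊢
      have hsplit : H * a ^ (k + 1) - a ^ (k + 1) * H
          = (H * a ^ k - a ^ k * H) * a + a ^ k * (H * a - a * H) := by
        rw [pow_succ]
        noncomm_ring
      rw [hsplit, ih, h, smul_mul_assoc, mul_smul_comm, ← pow_succ]
      rw [← add_smul]
      congr 1
      push_cast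
      ring
  have hinj : Function.Injective (fun k : ℕ => (k : K) * c) := by
    intro k l hkl
    simp only at hkl
    have := mul_right_cancel₀ hc hkl
    exact_mod_cast this
  have li := T.eigenvectors_linearIndependent' (fun k : ℕ => (k : K) * c) hinj (fun k => a ^ k)
    (fun k => ⟨(Module.End.mem_eigenspace_iff).mpr (key k), hn k⟩)
  exact Module.Finite.not_linearIndependent_of_infinite _ li

end Sl2Aux

/-- For a finite-dimensional representation of `sl₂` in characteristic zero,
`dim (ker f) + dim (range e) = dim V`. -/
theorem stmt_9 {K V : Type*} [Field K] [CharZero K] [AddCommGroup V] [Module K V]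
    [FiniteDimensional K V]
    (E H F : Module.End K V)
    (hHE : ⁅H, E⁆ = (2 : K) • E) (hHF : ⁅H, F⁆ = (-2 : K) • F) (hEF : ⁅E, F⁆ = H) :
    Module.finrank K (LinearMap.ker F) + Module.finrank K (LinearMap.range E) =
      Module.finrank K V := by
  rw [Ring.lie_def] at hHE hHF hEF
  have hE : IsNilpotent E := sl2_isNilpotent two_ne_zero hHE
  have hF : IsNilpotent F := sl2_isNilpotent (c := (-2 : K)) (by norm_num) hHF
  obtain ⟨p, hp⟩ := hE
  obtain ⟨q, hq⟩ := hF
  set N := p + q + 2 with hNdef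
  have hEN : E ^ N = 0 := pow_eq_zero_of_le (by omega) hp
  have hFN : F ^ N = 0 := pow_eq_zero_of_le (by omega) hq
  have hFN' : (-F) ^ N = 0 := by rw [neg_pow, hFN, mul_zero]
  have hN1 : 1 ≤ N := by omega
  have hM3 : 3 ≤ N + N := by omega
  set u := sl2exp K E N with hu
  set u' := sl2exp K (-E) N with hu'
  set v := sl2exp K (-F) N with hv
  set v' := sl2exp K F N with hv'
  have huu' : u * u' = 1 := sl2exp_mul_neg hN1 hEN
  have hu'u : u' * u = 1 := sl2exp_neg_mul hN1 hEN
  have hvv' : v * v' = 1 := by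
    have := sl2exp_mul_neg (K := K) hN1 hFN'
    rwa [neg_neg] at this
  have hv'v : v' * v = 1 := by
    have := sl2exp_neg_mul (K := K) hN1 hFN'
    rwa [neg_neg] at this
  -- the derivations ad E and ad (-F)
  set DE : Module.End K (Module.End K V) :=
    LinearMap.mulLeft K E - LinearMap.mulRight K E with hDE
  set DF : Module.End K (Module.End K V) :=
    LinearMap.mulLeft K (-F) - LinearMap.mulRight K (-F) with hDF
  have DEapp : ∀ x, DE x = E * x - x * E := fun x => by simp [hDE, LinearMap.sub_apply]
  have DFapp : ∀ x, DF x = x * F - F * x := fun x => by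
    simp only [hDF, LinearMap.sub_apply, LinearMap.mulLeft_apply, LinearMap.mulRight_apply,
      neg_mul, mul_neg]
    abel
  have dE_E : DE E = 0 := by rw [DEapp, sub_self]
  have dE_H : DE H = -((2 : K) • E) := by
    rw [DEapp]
    have := congrArg Neg.neg hHE
    rwa [neg_sub] at this
  have dE_F : DE F = H := by rw [DEapp, hEF]
  have dF_E : DF E = H := by rw [DFapp, hEF]
  have dF_H : DF H = (-2 : K) • F := by rw [DFapp, hHF]
  have dF_F : DF F = 0 := by rw [DFapp, sub_self]
  -- the three conjugation identities
  have h1 : u * E * u' = E := by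
    rw [hu, hu', sl2exp_conj E E hEN, ← hDE,
      sl2exp_end_apply DE dE_E (map_zero DE) (map_zero DE) hM3]
    simp
  have h2 : v * E * v' = E + H - F := by
    have hconj := sl2exp_conj (K := K) (-F) E hFN'
    rw [neg_neg] at hconj
    rw [hv, hv', hconj, ← hDF]
    have dz : DF ((-2 : K) • F) = 0 := by rw [map_smul, dF_F, smul_zero]
    rw [sl2exp_end_apply DF dF_E dF_H dz hM3]
    match_scalars <;> norm_num
  have h3 : u * (E + H - F) * u' = -F := by
    rw [hu, hu', sl2exp_conj E (E + H - F) hEN, ← hDE]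
    have s1 : DE (E + H - F) = -((2 : K) • E) - H := by
      rw [map_sub, map_add, dE_E, dE_H, dE_F]
      module
    have s2 : DE (-((2 : K) • E) - H) = (2 : K) • E := by
      rw [map_sub, map_neg, map_smul, dE_E, dE_H]
      module
    have s3 : DE ((2 : K) • E) = 0 := by rw [map_smul, dE_E, smul_zero]
    rw [sl2exp_end_apply DE s1 s2 s3 hM3]
    match_scalars <;> norm_num
  -- turn the conjugation identities into commutation identities
  have hcommE : u * E = E * u := by
    calc u * E = u * E * (u' * u) := by rw [hu'u, mul_one]
      _ = (u * E * u') * u := by simp only [mul_assoc]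
      _ = E * u := by rw [h1]
  have hvE : v * E = (E + H - F) * v := by
    calc v * E = v * E * (v' * v) := by rw [hv'v, mul_one]
      _ = (v * E * v') * v := by simp only [mul_assoc]
      _ = (E + H - F) * v := by rw [h2]
  have huEHF : u * (E + H - F) = -F * u := by
    calc u * (E + H - F) = u * (E + H - F) * (u' * u) := by rw [hu'u, mul_one]
      _ = (u * (E + H - F) * u') * u := by simp only [mul_assoc]
      _ = -F * u := by rw [h3]
  set g := u * v * u with hgdef
  set g' := u' * v' * u' with hg'def
  have cuu' : ∀ x : Module.End K V, u * (u' * x) = x := fun x => by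
    rw [← mul_assoc, huu', one_mul]
  have cu'u : ∀ x : Module.End K V, u' * (u * x) = x := fun x => by
    rw [← mul_assoc, hu'u, one_mul]
  have cvv' : ∀ x : Module.End K V, v * (v' * x) = x := fun x => by
    rw [← mul_assoc, hvv', one_mul]
  have cv'v : ∀ x : Module.End K V, v' * (v * x) = x := fun x => by
    rw [← mul_assoc, hv'v, one_mul]
  have hgg' : g * g' = 1 := by
    rw [hgdef, hg'def]
    calc u * v * u * (u' * v' * u') = u * (v * (u * (u' * (v' * u')))) := by
          simp only [mul_assoc]
      _ = 1 := by rw [cuu', cvv', huu']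
  have hg'g : g' * g = 1 := by
    rw [hgdef, hg'def]
    calc u' * v' * u' * (u * v * u) = u' * (v' * (u' * (u * (v * u)))) := by
          simp only [mul_assoc]
      _ = 1 := by rw [cu'u, cv'v, hu'u]
  have hgE : g * E = -F * g := by
    calc g * E = u * (v * (u * E)) := by rw [hgdef]; simp only [mul_assoc]
      _ = u * (v * (E * u)) := by rw [hcommE]
      _ = u * ((v * E) * u) := by rw [mul_assoc]
      _ = u * (((E + H - F) * v) * u) := by rw [hvE]
      _ = (u * (E + H - F)) * (v * u) := by simp only [mul_assoc]
      _ = (-F * u) * (v * u) := by rw [huEHF]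
      _ = -F * g := by rw [hgdef]; simp only [mul_assoc]
  have hEeq : E = g' * (-F * g) := by
    calc E = (g' * g) * E := by rw [hg'g, one_mul]
      _ = g' * (g * E) := by rw [mul_assoc]
      _ = g' * (-F * g) := by rw [hgE]
  -- rank computations
  have hsurj : Function.Surjective g := fun x =>
    ⟨g' x, by rw [← Module.End.mul_apply, hgg', Module.End.one_apply]⟩
  have hinj : Function.Injective g' := by
    intro x y hxy
    have := congrArg g hxy
    rwa [← Module.End.mul_apply, ← Module.End.mul_apply, hgg', Module.End.one_apply,
      Module.End.one_apply] at this
  have hr1 : LinearMap.range (-F * g) = LinearMap.range (-F) := by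
    rw [Module.End.mul_eq_comp,
      LinearMap.range_comp_of_range_eq_top _ (LinearMap.range_eq_top.mpr hsurj)]
  have hrE : Module.finrank K (LinearMap.range E) = Module.finrank K (LinearMap.range F) := by
    rw [hEeq, Module.End.mul_eq_comp, LinearMap.range_comp, hr1, LinearMap.range_neg]
    exact ((Submodule.equivMapOfInjective g' hinj (LinearMap.range F)).finrank_eq).symm
  have hrn := LinearMap.finrank_range_add_finrank_ker F
  omega
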